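/- Let $0 < p \le 1$ and let $(\mathcal{M}, d)$ be a $p$-metric space such that either $\mathcal{M}$ is unbounded or its completion contains a limit point (a non-isolated point). Then for every $t > 1$ there exist a sequence $(x_n)_{n \ge 1}$ in $\mathcal{M}$, a point $x_0$ in the completion of $\mathcal{M}$, and a monotone sequence $(r_n)_{n \ge 1}$ of positive reals such that, setting $r_0 = 0$, for all distinct $m, n \in \mathbb{N} \cup \{0\}$: $d^p(x_n, x_m) \ge r_n + r_m$ and $|r_n - r_m| / d^p(x_n, x_m) \ge 1/t$. -/

import Mathlib

open Filter Topology UniformSpace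

private lemma calc0 (t s b : ℝ) (hs : 1 < s) (hss : s * s = t) (hb : 0 < b) :
    b / s ≤ b ∧ 1 / t ≤ (b / s) / b := by
  have hs0 : 0 < s := by linarith
  have ht0 : 0 < t := by nlinarith
  constructor
  · exact div_le_self hb.le hs.le
  · have h1 : b / s / b = 1 / s := by field_simp
    rw [h1]
    apply one_div_le_one_div_of_le hs0
    nlinarith

private lemma calc1 (t s a b dd : ℝ) (hs : 1 < s) (hss : s * s = t)
    (ha : 0 < a) (hb : 0 < b)
    (hsep : a + b ≤ s * |a - b|) (h1 : |a - b| ≤ dd) (h2 : dd ≤ a + b) :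
    a / s + b / s ≤ dd ∧ 1 / t ≤ |b / s - a / s| / dd := by
  have hs0 : 0 < s := by linarith
  have ht0 : 0 < t := by nlinarith
  have habs : 0 < |a - b| := by nlinarith [abs_nonneg (a - b)]
  have hd : 0 < dd := lt_of_lt_of_le habs h1
  constructor
  · rw [← add_div, div_le_iff₀ hs0]
    nlinarith [mul_le_mul_of_nonneg_left h1 hs0.le]
  · have he : |b / s - a / s| = |a - b| / s := by
      rw [div_sub_div_same, abs_div, abs_of_pos hs0, abs_sub_comm]
    rw [he, div_le_div_iff₀ ht0 hd, div_mul_eq_mul_div, le_div_iff₀ hs0]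
    nlinarith [mul_le_mul_of_nonneg_right (h2.trans hsep) hs0.le]

private lemma aux_main {N : Type*} [MetricSpace N] (t : ℝ) (ht : 1 < t)
    (X : ℕ → N)
    (hpos : ∀ n, 1 ≤ n → 0 < dist (X n) (X 0))
    (hmono : (∀ i j, 1 ≤ i → i ≤ j → dist (X i) (X 0) ≤ dist (X j) (X 0)) ∨
       (∀ i j, 1 ≤ i → i ≤ j → dist (X j) (X 0) ≤ dist (X i) (X 0)))
    (hsep : ∀ i j, 1 ≤ i → 1 ≤ j → i ≠ j →
       dist (X i) (X 0) + dist (X j) (X 0) ≤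
         Real.sqrt t * |dist (X i) (X 0) - dist (X j) (X 0)|) :
    ∃ r : ℕ → ℝ,
      r 0 = 0 ∧ (∀ n, 1 ≤ n → 0 < r n) ∧
      ((∀ m n, 1 ≤ m → m ≤ n → r m ≤ r n) ∨ (∀ m n, 1 ≤ m → m ≤ n → r n ≤ r m)) ∧
      (∀ m n : ℕ, m ≠ n →
        r m + r n ≤ dist (X m) (X n) ∧ 1 / t ≤ |r n - r m| / dist (X m) (X n)) := by
  set s := Real.sqrt t with hs_def
  have ht0 : 0 < t := lt_trans one_pos ht
  have hss : s * s = t := Real.mul_self_sqrt ht0.le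
  have hs1 : 1 < s := by nlinarith [Real.sqrt_nonneg t]
  have hs0 : 0 < s := lt_trans one_pos hs1
  refine ⟨fun n => if n = 0 then 0 else dist (X n) (X 0) / s, if_pos rfl, ?_, ?_, ?_⟩
  · intro n hn
    simp only [if_neg (by omega : n ≠ 0)]
    exact div_pos (hpos n hn) hs0
  · rcases hmono with hm | hm
    · left; intro m n hm1 hmn
      simp only [if_neg (by omega : m ≠ 0), if_neg (by omega : n ≠ 0)]
      gcongr
      exact hm m n hm1 hmn
    · right; intro m n hm1 hmn
      simp only [if_neg (by omega : m ≠ 0), if_neg (by omega : n ≠ 0)]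
      gcongr
      exact hm m n hm1 hmn
  · intro m n hmn
    by_cases hm0 : m = 0
    · subst hm0
      have hn1 : 1 ≤ n := by omega
      simp only [if_pos rfl, if_true, eq_self_iff_true, if_neg (by omega : n ≠ 0)]
      have hb := hpos n hn1
      obtain ⟨c1, c2⟩ := calc0 t s (dist (X n) (X 0)) hs1 hss hb
      constructor
      · rw [dist_comm (X 0) (X n), zero_add]; exact c1
      · rw [dist_comm (X 0) (X n), sub_zero, abs_of_pos (div_pos hb hs0)]; exact c2
    · by_cases hn0 : n = 0
      · subst hn0
        have hm1 : 1 ≤ m := by omega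
        simp only [if_pos rfl, if_true, eq_self_iff_true, if_neg hm0]
        have hb := hpos m hm1
        obtain ⟨c1, c2⟩ := calc0 t s (dist (X m) (X 0)) hs1 hss hb
        constructor
        · rw [add_zero]; exact c1
        · rw [zero_sub, abs_neg, abs_of_pos (div_pos hb hs0)]; exact c2
      · have hm1 : 1 ≤ m := by omega
        have hn1 : 1 ≤ n := by omega
        simp only [if_neg hm0, if_neg hn0]
        exact calc1 t s (dist (X m) (X 0)) (dist (X n) (X 0)) (dist (X m) (X n))
          hs1 hss (hpos m hm1) (hpos n hn1) (hsep m n hm1 hn1 hmn)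
          (abs_dist_sub_le (X m) (X n) (X 0)) (dist_triangle_right (X m) (X n) (X 0))

/-- If a `p`-metric space is unbounded or its completion has a limit point, then for each
`t > 1` there are points `(x_n)` and a monotone sequence `(r_n)` of positive reals
(with `r_0 = 0` and `x_0` in the completion) witnessing the separation conditions
`d^p(x_n, x_m) ≥ r_n + r_m` and `|r_n - r_m|/d^p(x_n, x_m) ≥ 1/t`. Here the metric
(`dist`) is `d^p`, and it extends canonically to the completion. -/
theorem stmt_5
    (p : ℝ) (hp : 0 < p) (hp1 : p ≤ 1)
    (M : Type*) [MetricSpace M]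
    (d : M → M → ℝ)
    (hnn : ∀ x y, 0 ≤ d x y)
    (hsymm : ∀ x y, d x y = d y x)
    (heq : ∀ x y, d x y = 0 ↔ x = y)
    (htri : ∀ x y z, d x z ^ p ≤ d x y ^ p + d y z ^ p)
    (hdist : ∀ x y : M, dist x y = d x y ^ p)
    (hyp : (∀ R : ℝ, ∃ x y : M, R < d x y) ∨
      (∃ x₀ : Completion M, ∃ y : ℕ → M,
        (∀ n, (y n : Completion M) ≠ x₀) ∧
        Tendsto (fun n => (y n : Completion M)) atTop (𝓝 x₀))) :
    ∀ t : ℝ, 1 < t →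
      ∃ (x : ℕ → M) (x₀ : Completion M) (r : ℕ → ℝ),
        r 0 = 0 ∧ (∀ n, 1 ≤ n → 0 < r n) ∧
        ((∀ m n, 1 ≤ m → m ≤ n → r m ≤ r n) ∨ (∀ m n, 1 ≤ m → m ≤ n → r n ≤ r m)) ∧
        (∀ m n : ℕ, m ≠ n →
          r m + r n ≤ dist (if m = 0 then x₀ else (x m : Completion M))
              (if n = 0 then x₀ else (x n : Completion M)) ∧
          1 / t ≤ |r n - r m| /
            dist (if m = 0 then x₀ else (x m : Completion M))
              (if n = 0 then x₀ else (x n : Completion M))) := by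
  intro t ht
  set s := Real.sqrt t with hs_def
  have ht0 : 0 < t := lt_trans one_pos ht
  have hss : s * s = t := Real.mul_self_sqrt ht0.le
  have hs1 : 1 < s := by nlinarith [Real.sqrt_nonneg t]
  have hs0 : 0 < s := lt_trans one_pos hs1
  set K : ℝ := (s + 1) / (s - 1) with hK_def
  have hsm1 : 0 < s - 1 := by linarith
  have hK1 : 1 < K := by
    rw [hK_def, lt_div_iff₀ hsm1]; linarith
  have hK0 : 0 < K := lt_trans one_pos hK1
  have hsK : (s - 1) * K = s + 1 := by
    rw [hK_def]; field_simp
  rcases hyp with h | h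
  · -- unbounded case
    obtain ⟨z, w, hzw⟩ := h 0
    have H : ∀ S : ℝ, ∃ w : M, S < dist w z := by
      intro S
      set S' := max S 0 with hS'
      have hS'0 : 0 ≤ S' := le_max_right S 0
      obtain ⟨a, b, hab⟩ := h ((2 * S' + 1) ^ (1 / p))
      have hR0 : (0:ℝ) ≤ (2 * S' + 1) ^ (1 / p) := Real.rpow_nonneg (by linarith) _
      have h1 : 2 * S' + 1 < d a b ^ p := by
        have h2 := Real.rpow_lt_rpow hR0 hab hp
        rwa [← Real.rpow_mul (by linarith), one_div_mul_cancel hp.ne', Real.rpow_one] at h2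
      have htr := htri a z b
      have h2 : S' < d a z ^ p ∨ S' < d z b ^ p := by
        by_contra hc
        push_neg at hc
        linarith [hc.1, hc.2]
      rcases h2 with h2 | h2
      · exact ⟨a, lt_of_le_of_lt (le_max_left S 0) (by rwa [hdist])⟩
      · refine ⟨b, lt_of_le_of_lt (le_max_left S 0) ?_⟩
        rw [hdist, hsymm b z]; exact h2
    choose f hf using fun a : M => H (K * dist a z + 1)
    obtain ⟨x, hx0, hxs⟩ : ∃ x : ℕ → M, x 0 = z ∧
        ∀ n, K * dist (x n) z + 1 < dist (x (n+1)) z :=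
      ⟨fun n => f^[n] z, rfl, fun n => by
        show K * dist (f^[n] z) z + 1 < dist (f^[n+1] z) z
        rw [Function.iterate_succ_apply']; exact hf _⟩
    have hmonoD : Monotone fun n => dist (x n) z := by
      apply monotone_nat_of_le_succ
      intro n
      have h1 := hxs n
      nlinarith [dist_nonneg (x := x n) (y := z)]
    have hpos1 : ∀ n, 1 ≤ n → 0 < dist (x n) z := by
      intro n hn
      have h1 := hxs 0
      rw [hx0, dist_self] at h1
      have h2 := hmonoD hn
      simp only at h2
      nlinarith [dist_nonneg (x := x 0) (y := z)]
    have hgrow : ∀ i j, i < j → K * dist (x i) z < dist (x j) z := by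
      intro i j hij
      have h1 := hxs i
      have h2 := hmonoD (show i + 1 ≤ j from hij)
      simp only at h2
      linarith
    set X : ℕ → Completion M := fun n => if n = 0 then (↑z : Completion M) else ↑(x n)
      with hX_def
    have hXd : ∀ n, 1 ≤ n → dist (X n) (X 0) = dist (x n) z := by
      intro n hn
      simp only [hX_def, if_neg (by omega : n ≠ 0), if_pos rfl, Completion.dist_eq]
    have key : ∀ i j, 1 ≤ i → i < j →
        dist (x i) z + dist (x j) z ≤ s * |dist (x i) z - dist (x j) z| := by
      intro i j hi hij
      have hg := hgrow i j hij
      have hEi : (0:ℝ) ≤ dist (x i) z := dist_nonneg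
      have habs : dist (x i) z - dist (x j) z ≤ 0 := by nlinarith
      rw [abs_of_nonpos habs]
      have h3 : (s - 1) * (K * dist (x i) z) ≤ (s - 1) * dist (x j) z :=
        mul_le_mul_of_nonneg_left hg.le (by linarith)
      nlinarith
    obtain ⟨r, hr0, hrpos, hrmono, hrmain⟩ := aux_main t ht X
      (fun n hn => by rw [hXd n hn]; exact hpos1 n hn)
      (Or.inl (fun i j hi hij => by
        rw [hXd i hi, hXd j (le_trans hi hij)]
        exact hmonoD hij))
      (by
        intro i j hi hj hne
        rw [hXd i hi, hXd j hj, ← hs_def]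
        rcases hne.lt_or_gt with hlt | hlt
        · exact key i j hi hlt
        · rw [abs_sub_comm]
          linarith [key j i hj hlt])
    exact ⟨x, ↑z, r, hr0, hrpos, hrmono, hrmain⟩
  · -- limit point case
    obtain ⟨x₀, y, hne, hlim⟩ := h
    have hposy : ∀ n, 0 < dist (↑(y n) : Completion M) x₀ := fun n => dist_pos.mpr (hne n)
    have hstep : ∀ k : ℕ, ∃ m : ℕ,
        dist (↑(y m) : Completion M) x₀ < dist (↑(y k) : Completion M) x₀ / K := by
      intro k
      have hε : 0 < dist (↑(y k) : Completion M) x₀ / K := div_pos (hposy k) hK0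
      obtain ⟨N, hN⟩ := Metric.tendsto_atTop.mp hlim _ hε
      exact ⟨N, hN N le_rfl⟩
    choose g hg using hstep
    obtain ⟨φ, hφ⟩ : ∃ φ : ℕ → ℕ, ∀ n,
        dist (↑(y (φ (n+1))) : Completion M) x₀ < dist (↑(y (φ n)) : Completion M) x₀ / K :=
      ⟨fun n => g^[n] 0, fun n => by
        show dist (↑(y (g^[n+1] 0)) : Completion M) x₀ <
          dist (↑(y (g^[n] 0)) : Completion M) x₀ / K
        rw [Function.iterate_succ_apply']; exact hg _⟩
    set x : ℕ → M := fun n => y (φ n) with hx_def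
    have hDpos : ∀ n, 0 < dist (↑(x n) : Completion M) x₀ := fun n => hposy (φ n)
    have hantiD : Antitone fun n => dist (↑(x n) : Completion M) x₀ := by
      apply antitone_nat_of_succ_le
      intro n
      have h1 := hφ n
      have h2 : dist (↑(y (φ n)) : Completion M) x₀ / K ≤ dist (↑(y (φ n)) : Completion M) x₀ :=
        div_le_self (hposy _).le hK1.le
      simp only [hx_def]
      linarith
    have hdecay : ∀ i j, i < j →
        K * dist (↑(x j) : Completion M) x₀ < dist (↑(x i) : Completion M) x₀ := by
      intro i j hij
      have h1 := hφ i
      have h2 := hantiD (show i + 1 ≤ j from hij)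
      simp only [hx_def] at h2 ⊢
      rw [lt_div_iff₀ hK0] at h1
      nlinarith [hposy (φ j), hK0]
    set X : ℕ → Completion M := fun n => if n = 0 then x₀ else ↑(x n) with hX_def
    have hXd : ∀ n, 1 ≤ n → dist (X n) (X 0) = dist (↑(x n) : Completion M) x₀ := by
      intro n hn
      simp only [hX_def, if_neg (by omega : n ≠ 0), if_pos rfl]
    have key : ∀ i j, i < j →
        dist (↑(x i) : Completion M) x₀ + dist (↑(x j) : Completion M) x₀ ≤
          s * |dist (↑(x i) : Completion M) x₀ - dist (↑(x j) : Completion M) x₀| := by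
      intro i j hij
      have hg := hdecay i j hij
      have hEj := (hDpos j).le
      have habs : (0:ℝ) ≤ dist (↑(x i) : Completion M) x₀ - dist (↑(x j) : Completion M) x₀ := by
        nlinarith
      rw [abs_of_nonneg habs]
      have h3 : (s - 1) * (K * dist (↑(x j) : Completion M) x₀) ≤
          (s - 1) * dist (↑(x i) : Completion M) x₀ :=
        mul_le_mul_of_nonneg_left hg.le (by linarith)
      nlinarith
    obtain ⟨r, hr0, hrpos, hrmono, hrmain⟩ := aux_main t ht X
      (fun n hn => by rw [hXd n hn]; exact hDpos n)
      (Or.inr (fun i j hi hij => by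
        rw [hXd i hi, hXd j (le_trans hi hij)]
        exact hantiD hij))
      (by
        intro i j hi hj hne
        rw [hXd i hi, hXd j hj, ← hs_def]
        rcases hne.lt_or_gt with hlt | hlt
        · exact key i j hlt
        · rw [abs_sub_comm]
          linarith [key j i hlt])
    exact ⟨x, x₀, r, hr0, hrpos, hrmono, hrmain⟩
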